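/- (Splitting rule) Let v ∈ FΩ_k and w ∈ FΩ_ℓ be such that every subset in the support of v is disjoint from every subset in the support of w. Then (v·w)φ^{(t)} = Σ_{i=0}^t ((v)φ^{(i)}) · ((w)φ^{(t-i)}), where · denotes the bilinear product sending disjoint subsets u, v to u ∪ v and non-disjoint pairs to 0. -/

import Mathlib

/-- The `a`-step boundary map `φ^{(a)}`. -/
noncomputable def phiStep (n : ℕ) (F : Type) [Field F] (a : ℕ) :
    (Finset (Fin n) →₀ F) →ₗ[F] (Finset (Fin n) →₀ F) :=
  Finsupp.lsum F fun ω =>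
    (LinearMap.id : F →ₗ[F] F).smulRight
      (if a ≤ ω.card then
        ∑ ω' ∈ ω.powersetCard (ω.card - a), Finsupp.single ω' (1 : F)
      else 0)

/-- The bilinear product on `⊕_k FΩ_k`: on basis subsets, `u·v = u ∪ v` if `u` and `v`
are disjoint, and `0` otherwise. -/
noncomputable def fmul (n : ℕ) (F : Type) [Field F] (x y : Finset (Fin n) →₀ F) :
    Finset (Fin n) →₀ F :=
  x.sum fun u c => y.sum fun v d =>
    if Disjoint u v then Finsupp.single (u ∪ v) (c * d) else 0

variable {n : ℕ} {F : Type} [Field F]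

lemma phiStep_single (a : ℕ) (ω : Finset (Fin n)) (c : F) :
    phiStep n F a (Finsupp.single ω c)
      = if a ≤ ω.card then
          ∑ ω' ∈ ω.powersetCard (ω.card - a), Finsupp.single ω' c
        else 0 := by
  rw [phiStep, Finsupp.lsum_single]
  simp only [LinearMap.smulRight_apply, LinearMap.id_apply]
  split
  · rw [Finset.smul_sum]
    simp [Finsupp.smul_single]
  · simp

lemma fmul_single_single (u u' : Finset (Fin n)) (c d : F) :
    fmul n F (Finsupp.single u c) (Finsupp.single u' d)
      = if Disjoint u u' then Finsupp.single (u ∪ u') (c * d) else 0 := by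
  rw [fmul, Finsupp.sum_single_index, Finsupp.sum_single_index]
  · split <;> simp
  · rw [Finsupp.sum_single_index] <;> split <;> simp

lemma fmul_zero_left (y : Finset (Fin n) →₀ F) : fmul n F 0 y = 0 := by
  simp [fmul]

lemma fmul_zero_right (x : Finset (Fin n) →₀ F) : fmul n F x 0 = 0 := by
  simp [fmul]

lemma fmul_add_left (x x' y : Finset (Fin n) →₀ F) :
    fmul n F (x + x') y = fmul n F x y + fmul n F x' y := by
  rw [fmul, fmul, fmul, Finsupp.sum_add_index']
  · intro u
    rw [Finsupp.sum]
    apply Finset.sum_eq_zero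
    intro v _
    split <;> simp
  · intro u c c'
    rw [← Finsupp.sum_add]
    apply Finsupp.sum_congr
    intro v _
    split <;> simp [add_mul, Finsupp.single_add]

lemma fmul_add_right (x y y' : Finset (Fin n) →₀ F) :
    fmul n F x (y + y') = fmul n F x y + fmul n F x y' := by
  rw [fmul, fmul, fmul, ← Finsupp.sum_add]
  apply Finsupp.sum_congr
  intro u _
  rw [Finsupp.sum_add_index']
  · intro v
    split <;> simp
  · intro v d d'
    split <;> simp [mul_add, Finsupp.single_add]

lemma fmul_sum_left {ι : Type*} (s : Finset ι) (f : ι → (Finset (Fin n) →₀ F))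
    (y : Finset (Fin n) →₀ F) :
    fmul n F (∑ i ∈ s, f i) y = ∑ i ∈ s, fmul n F (f i) y := by
  classical
  induction s using Finset.induction with
  | empty => simp [fmul_zero_left]
  | insert a s h ih => simp [Finset.sum_insert h, fmul_add_left, ih]

lemma fmul_sum_right {ι : Type*} (s : Finset ι) (x : Finset (Fin n) →₀ F)
    (f : ι → (Finset (Fin n) →₀ F)) :
    fmul n F x (∑ i ∈ s, f i) = ∑ i ∈ s, fmul n F x (f i) := by
  classical
  induction s using Finset.induction with
  | empty => simp [fmul_zero_right]
  | insert a s h ih => simp [Finset.sum_insert h, fmul_add_right, ih]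

/-- Core lemma: the splitting rule on single basis elements. -/
lemma splitting_core (u u' : Finset (Fin n)) (hd : Disjoint u u') (c d : F) (t : ℕ) :
    phiStep n F t (fmul n F (Finsupp.single u c) (Finsupp.single u' d))
      = ∑ i ∈ Finset.range (t + 1),
          fmul n F (phiStep n F i (Finsupp.single u c))
            (phiStep n F (t - i) (Finsupp.single u' d)) := by
  classical
  set K := u.card
  set L := u'.card
  have hcard : (u ∪ u').card = K + L := Finset.card_union_of_disjoint hd
  -- rewrite LHS
  rw [fmul_single_single, if_pos hd, phiStep_single, hcard]
  -- rewrite RHS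
  have hrhs : ∀ i, fmul n F (phiStep n F i (Finsupp.single u c))
      (phiStep n F (t - i) (Finsupp.single u' d))
      = if i ≤ K ∧ t - i ≤ L then
          ∑ α ∈ u.powersetCard (K - i), ∑ β ∈ u'.powersetCard (L - (t - i)),
            Finsupp.single (α ∪ β) (c * d)
        else 0 := by
    intro i
    rw [phiStep_single, phiStep_single]
    by_cases h1 : i ≤ K
    · by_cases h2 : t - i ≤ L
      · rw [if_pos h1, if_pos h2, if_pos ⟨h1, h2⟩, fmul_sum_left]
        apply Finset.sum_congr rfl
        intro α hα
        rw [fmul_sum_right]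
        apply Finset.sum_congr rfl
        intro β hβ
        rw [fmul_single_single, if_pos]
        exact hd.mono (Finset.mem_powersetCard.1 hα).1 (Finset.mem_powersetCard.1 hβ).1
      · rw [if_pos h1, if_neg h2, fmul_zero_right,
          if_neg (show ¬(i ≤ K ∧ t - i ≤ L) by tauto)]
    · rw [if_neg h1, fmul_zero_left, if_neg (show ¬(i ≤ K ∧ t - i ≤ L) by tauto)]
  rw [Finset.sum_congr rfl fun i _ => hrhs i]
  rw [Finset.sum_ite, Finset.sum_const_zero, add_zero]
  by_cases ht : t ≤ K + L
  · rw [if_pos ht]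
    trans (∑ p ∈ ((Finset.range (t+1)).filter fun i => i ≤ K ∧ t - i ≤ L).sigma
        (fun i => (u.powersetCard (K - i)) ×ˢ (u'.powersetCard (L - (t - i)))),
        Finsupp.single (p.2.1 ∪ p.2.2) (c * d))
    swap
    · rw [Finset.sum_sigma]
      exact Finset.sum_congr rfl fun i _ => Finset.sum_product _ _ _
    · apply Finset.sum_nbij' (i := fun σ => (⟨K - (σ ∩ u).card, (σ ∩ u, σ ∩ u')⟩ :
        (i : ℕ) × (Finset (Fin n) × Finset (Fin n)))) (j := fun p => p.2.1 ∪ p.2.2)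
      · intro σ hσ
        obtain ⟨hsub, hc⟩ := Finset.mem_powersetCard.1 hσ
        have hau : σ ∩ u ⊆ u := Finset.inter_subset_right
        have hbu : σ ∩ u' ⊆ u' := Finset.inter_subset_right
        have hab : (σ ∩ u) ∪ (σ ∩ u') = σ := by
          rw [← Finset.inter_union_distrib_left]
          exact Finset.inter_eq_left.2 hsub
        have hdab : Disjoint (σ ∩ u) (σ ∩ u') :=
          hd.mono Finset.inter_subset_right Finset.inter_subset_right
        have hsum : (σ ∩ u).card + (σ ∩ u').card = K + L - t := by
          rw [← Finset.card_union_of_disjoint hdab, hab, hc]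
        have hAK : (σ ∩ u).card ≤ K := Finset.card_le_card hau
        have hBL : (σ ∩ u').card ≤ L := Finset.card_le_card hbu
        simp only [Finset.mem_sigma, Finset.mem_filter, Finset.mem_range, Finset.mem_product,
          Finset.mem_powersetCard]
        refine ⟨⟨?_, ?_, ?_⟩, ⟨hau, ?_⟩, ⟨hbu, ?_⟩⟩ <;> omega
      · intro p hp
        simp only [Finset.mem_sigma, Finset.mem_filter, Finset.mem_range, Finset.mem_product,
          Finset.mem_powersetCard] at hp
        obtain ⟨⟨hi1, hi2, hi3⟩, ⟨ha, hac⟩, ⟨hb, hbc⟩⟩ := hp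
        have hdab : Disjoint p.2.1 p.2.2 := hd.mono ha hb
        rw [Finset.mem_powersetCard]
        constructor
        · exact Finset.union_subset_union ha hb
        · rw [Finset.card_union_of_disjoint hdab, hac, hbc]; omega
      · intro σ hσ
        obtain ⟨hsub, hc⟩ := Finset.mem_powersetCard.1 hσ
        simp only
        rw [← Finset.inter_union_distrib_left]
        exact Finset.inter_eq_left.2 hsub
      · intro p hp
        simp only [Finset.mem_sigma, Finset.mem_filter, Finset.mem_range, Finset.mem_product,
          Finset.mem_powersetCard] at hp
        obtain ⟨⟨hi1, hi2, hi3⟩, ⟨ha, hac⟩, ⟨hb, hbc⟩⟩ := hp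
        have h1 : (p.2.1 ∪ p.2.2) ∩ u = p.2.1 := by
          ext x
          simp only [Finset.mem_inter, Finset.mem_union]
          constructor
          · rintro ⟨h | h, hx⟩
            · exact h
            · exact absurd hx (Finset.disjoint_left.1 (hd.symm.mono_left hb) h)
          · intro h
            exact ⟨Or.inl h, ha h⟩
        have h2 : (p.2.1 ∪ p.2.2) ∩ u' = p.2.2 := by
          ext x
          simp only [Finset.mem_inter, Finset.mem_union]
          constructor
          · rintro ⟨h | h, hx⟩
            · exact absurd hx (Finset.disjoint_left.1 (hd.mono_left ha) h)
            · exact h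
          · intro h
            exact ⟨Or.inr h, hb h⟩
        have : K - ((p.2.1 ∪ p.2.2) ∩ u).card = p.1 := by rw [h1, hac]; omega
        cases p with
        | mk i q =>
          cases q with
          | mk a b =>
            simp only at h1 h2 hac hi2 ⊢
            rw [h1, h2]
            have hKi : K - a.card = i := by rw [hac]; omega
            rw [hKi]
      · intro σ hσ
        obtain ⟨hsub, hc⟩ := Finset.mem_powersetCard.1 hσ
        have hab : (σ ∩ u) ∪ (σ ∩ u') = σ := by
          rw [← Finset.inter_union_distrib_left]
          exact Finset.inter_eq_left.2 hsub
        simp only [hab]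
  · rw [if_neg ht]
    symm
    apply Finset.sum_eq_zero
    intro p hp
    simp only [Finset.mem_filter, Finset.mem_range] at hp
    omega

set_option maxHeartbeats 1000000 in
/-- Splitting rule: if every subset in the support of `v ∈ FΩ_k` is
disjoint from every subset in the support of `w ∈ FΩ_ℓ`, then
`(v·w)φ^{(t)} = Σ_{i=0}^t ((v)φ^{(i)}) · ((w)φ^{(t-i)})`. -/
theorem splitting_rule (n : ℕ) (F : Type) [Field F] (k l t : ℕ)
    (v w : Finset (Fin n) →₀ F)
    (hv : ∀ u ∈ v.support, u.card = k) (hw : ∀ u ∈ w.support, u.card = l)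
    (hdisj : ∀ u ∈ v.support, ∀ u' ∈ w.support, Disjoint u u') :
    phiStep n F t (fmul n F v w)
      = ∑ i ∈ Finset.range (t + 1), fmul n F (phiStep n F i v) (phiStep n F (t - i) w) := by
  classical
  have hv' : v = ∑ u ∈ v.support, Finsupp.single u (v u) := (Finsupp.sum_single v).symm
  have hw' : w = ∑ u' ∈ w.support, Finsupp.single u' (w u') := (Finsupp.sum_single w).symm
  calc phiStep n F t (fmul n F v w)
      = ∑ u ∈ v.support, ∑ u' ∈ w.support,
          phiStep n F t (fmul n F (Finsupp.single u (v u)) (Finsupp.single u' (w u'))) := by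
        conv_lhs => rw [hv', hw']
        rw [fmul_sum_left]
        simp only [fmul_sum_right]
        rw [map_sum]
        exact Finset.sum_congr rfl fun u _ => map_sum _ _ _
    _ = ∑ u ∈ v.support, ∑ u' ∈ w.support, ∑ i ∈ Finset.range (t + 1),
          fmul n F (phiStep n F i (Finsupp.single u (v u)))
            (phiStep n F (t - i) (Finsupp.single u' (w u'))) := by
        refine Finset.sum_congr rfl fun u hu => Finset.sum_congr rfl fun u' hu' => ?_
        exact splitting_core u u' (hdisj u hu u' hu') _ _ t
    _ = ∑ u ∈ v.support, ∑ i ∈ Finset.range (t + 1), ∑ u' ∈ w.support,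
          fmul n F (phiStep n F i (Finsupp.single u (v u)))
            (phiStep n F (t - i) (Finsupp.single u' (w u'))) :=
        Finset.sum_congr rfl fun u _ => Finset.sum_comm
    _ = ∑ i ∈ Finset.range (t + 1), ∑ u ∈ v.support, ∑ u' ∈ w.support,
          fmul n F (phiStep n F i (Finsupp.single u (v u)))
            (phiStep n F (t - i) (Finsupp.single u' (w u'))) :=
        Finset.sum_comm
    _ = ∑ i ∈ Finset.range (t + 1), fmul n F (phiStep n F i v) (phiStep n F (t - i) w) := by
        refine Finset.sum_congr rfl fun i _ => ?_
        conv_rhs => rw [hv', hw']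
        rw [map_sum (phiStep n F i), map_sum (phiStep n F (t - i)), fmul_sum_left]
        exact Finset.sum_congr rfl fun u _ => (fmul_sum_right _ _ _).symm
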